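/- Let μ be a probability measure on the unit sphere S^{d-1} supported in a spherical cap S_α^+(U) = {x : ⟨x,U⟩ ≥ cos α} with U ∈ S^{d-1} and α ∈ (0, π/2). Let φ' : R → R be a positive continuous function and A a d×d real symmetric matrix. If Y[μ](x) := ∫ P_x[y] φ'(⟨Ax,y⟩) dμ(y) satisfies ∫ ‖Y[μ](x)‖² dμ(x) = 0, then μ is a Dirac point mass δ_{x₀} for some x₀ ∈ S_α^+(U). -/

import Mathlib

open MeasureTheory
open scoped RealInnerProductSpace

set_option maxHeartbeats 1000000

/-- if a probability measure `μ` supported on a spherical cap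
`S_α^+(U)` (with `α ∈ (0, π/2)`) has vanishing kinetic energy for the vector field
`Y[μ](x) = ∫ P_x[y] φ'(⟪Ax,y⟫) dμ(y)` with `φ' > 0` continuous and `A` symmetric,
then `μ` is a Dirac mass at a point of the cap. -/
theorem stmt5 {d : ℕ} (μ : Measure (EuclideanSpace ℝ (Fin d))) [IsProbabilityMeasure μ]
    (U : EuclideanSpace ℝ (Fin d)) (hU : ‖U‖ = 1)
    (α : ℝ) (hα : α ∈ Set.Ioo 0 (Real.pi / 2))
    (hsupp : μ {x | ¬ (‖x‖ = 1 ∧ Real.cos α ≤ ⟪x, U⟫)} = 0)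
    (φ' : ℝ → ℝ) (hφpos : ∀ s, 0 < φ' s) (hφcont : Continuous φ')
    (A : EuclideanSpace ℝ (Fin d) →ₗ[ℝ] EuclideanSpace ℝ (Fin d))
    (hsymm : ∀ x y : EuclideanSpace ℝ (Fin d), ⟪A x, y⟫ = ⟪x, A y⟫)
    (hcrit : ∫ x, ‖∫ y, φ' ⟪A x, y⟫ • (y - ⟪x, y⟫ • x) ∂μ‖ ^ 2 ∂μ = 0) :
    ∃ x₀ : EuclideanSpace ℝ (Fin d),
      ‖x₀‖ = 1 ∧ Real.cos α ≤ ⟪x₀, U⟫ ∧ μ = Measure.dirac x₀ := by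
  classical
  let E := EuclideanSpace ℝ (Fin d)
  have hcos : (0:ℝ) < Real.cos α :=
    Real.cos_pos_of_mem_Ioo ⟨by linarith [hα.1, Real.pi_pos], hα.2⟩
  set K : Set E := {x | ‖x‖ = 1 ∧ Real.cos α ≤ ⟪x, U⟫} with hKdef
  have haeK : ∀ᵐ x ∂μ, x ∈ K := by
    rw [ae_iff]
    have he : {x : E | ¬ x ∈ K} = {x : E | ¬ (‖x‖ = 1 ∧ Real.cos α ≤ ⟪x, U⟫)} := by
      ext x; simp [hKdef]
    rw [he]
    exact hsupp
  -- the continuous linear version of A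
  set Ac : E →L[ℝ] E := LinearMap.toContinuousLinearMap A with hAc
  have hAcA : ∀ x : E, Ac x = A x := fun x => rfl
  -- bound on the inner product argument
  have hAarg : ∀ x ∈ K, ∀ y ∈ K, ⟪A x, y⟫ ∈ Set.Icc (-‖Ac‖) ‖Ac‖ := by
    intro x hx y hy
    have h1 : |⟪A x, y⟫| ≤ ‖A x‖ * ‖y‖ := abs_real_inner_le_norm _ _
    have h2 : ‖A x‖ ≤ ‖Ac‖ := by
      rw [← hAcA]
      calc ‖Ac x‖ ≤ ‖Ac‖ * ‖x‖ := Ac.le_opNorm x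
      _ = ‖Ac‖ := by rw [hx.1, mul_one]
    have : |⟪A x, y⟫| ≤ ‖Ac‖ := by
      calc |⟪A x, y⟫| ≤ ‖A x‖ * ‖y‖ := h1
      _ = ‖A x‖ := by rw [hy.1, mul_one]
      _ ≤ ‖Ac‖ := h2
    exact abs_le.1 this
  -- the sup of φ' on the relevant compact interval
  obtain ⟨t₀, ht₀, hM⟩ :=
    (isCompact_Icc (a := -‖Ac‖) (b := ‖Ac‖)).exists_isMaxOn
      ⟨0, ⟨neg_nonpos.2 (norm_nonneg _), norm_nonneg _⟩⟩ hφcont.continuousOn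
  set M : ℝ := φ' t₀ with hMdef
  have hMpos : 0 < M := hφpos t₀
  have hφle : ∀ x ∈ K, ∀ y ∈ K, φ' ⟪A x, y⟫ ≤ M := by
    intro x hx y hy
    exact hM (hAarg x hx y hy)
  -- the vector field
  set Y : E → E := fun x => ∫ y, φ' ⟪A x, y⟫ • (y - ⟪x, y⟫ • x) ∂μ with hYdef
  -- joint continuity of the integrand
  set F : E × E → E := fun p => φ' ⟪A p.1, p.2⟫ • (p.2 - ⟪p.1, p.2⟫ • p.1) with hFdef
  have hFcont : Continuous F := by
    have h1 : Continuous fun p : E × E => ⟪A p.1, p.2⟫ := by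
      have : Continuous fun p : E × E => (Ac p.1, p.2) :=
        (Ac.continuous.comp continuous_fst).prodMk continuous_snd
      exact continuous_inner.comp this
    have h2 : Continuous fun p : E × E => ⟪p.1, p.2⟫ := continuous_inner
    exact ((hφcont.comp h1)).smul
      (continuous_snd.sub (h2.smul continuous_fst))
  -- a.e. bound on the integrand
  have hFbd : ∀ x ∈ K, ∀ y ∈ K, ‖F (x, y)‖ ≤ 2 * M := by
    intro x hx y hy
    have hxy : |⟪x, y⟫| ≤ 1 := by
      have := abs_real_inner_le_norm x y
      rwa [hx.1, hy.1, mul_one] at this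
    have h1 : ‖y - ⟪x, y⟫ • x‖ ≤ 2 := by
      calc ‖y - ⟪x, y⟫ • x‖ ≤ ‖y‖ + ‖⟪x, y⟫ • x‖ := norm_sub_le _ _
      _ = 1 + |⟪x, y⟫| := by rw [hy.1, norm_smul, hx.1, mul_one, Real.norm_eq_abs]
      _ ≤ 2 := by linarith
    have h2 : 0 ≤ φ' ⟪A x, y⟫ := (hφpos _).le
    calc ‖F (x, y)‖ = φ' ⟪A x, y⟫ * ‖y - ⟪x, y⟫ • x‖ := by
          simp only [hFdef]
          rw [norm_smul, Real.norm_eq_abs, abs_of_nonneg h2]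
    _ ≤ M * 2 := mul_le_mul (hφle x hx y hy) h1 (norm_nonneg _) hMpos.le
    _ = 2 * M := by ring
  -- measurability of Y
  have hYmeas : AEStronglyMeasurable Y μ :=
    (hFcont.stronglyMeasurable.integral_prod_right').aestronglyMeasurable
  -- per-x integrability
  have hFint : ∀ x ∈ K, Integrable (fun y => F (x, y)) μ := by
    intro x hx
    refine Integrable.mono' (integrable_const (2 * M))
      ((hFcont.comp (Continuous.prodMk_right x)).aestronglyMeasurable) ?_
    filter_upwards [haeK] with y hy
    exact hFbd x hx y hy
  -- Y vanishes a.e.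
  have hY0 : ∀ᵐ x ∂μ, Y x = 0 := by
    have hbd : ∀ᵐ x ∂μ, ‖Y x‖ ≤ 2 * M := by
      filter_upwards [haeK] with x hx
      have := norm_integral_le_of_norm_le_const (μ := μ)
        (f := fun y => F (x, y)) (C := 2 * M) ?_
      · simpa using this
      · filter_upwards [haeK] with y hy; exact hFbd x hx y hy
    have hint : Integrable (fun x => ‖Y x‖ ^ 2) μ := by
      refine Integrable.mono' (integrable_const ((2 * M) ^ 2))
        ?_ ?_
      · have : AEStronglyMeasurable (fun x => ‖Y x‖) μ := hYmeas.norm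
        exact (this.mul this).congr
          (by filter_upwards with x; simp only [Pi.mul_apply]; ring)
      · filter_upwards [hbd] with x hx
        have h0 : (0:ℝ) ≤ ‖Y x‖ := norm_nonneg _
        have : ‖Y x‖ ^ 2 ≤ (2 * M) ^ 2 := by nlinarith
        simpa [abs_of_nonneg (sq_nonneg ‖Y x‖)] using this
    have := (integral_eq_zero_iff_of_nonneg (fun x => sq_nonneg ‖Y x‖) hint).1 hcrit
    filter_upwards [this] with x hx
    have hx' : ‖Y x‖ ^ 2 = 0 := hx
    have hnorm : ‖Y x‖ = 0 := pow_eq_zero_iff (two_ne_zero) |>.1 hx'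
    exact norm_eq_zero.1 hnorm
  -- scalar integrand
  set g : E × E → ℝ := fun p => φ' ⟪A p.1, p.2⟫ * (⟪U, p.2⟫ - ⟪p.1, p.2⟫ * ⟪U, p.1⟫)
    with hgdef
  have hgF : ∀ p : E × E, g p = ⟪U, F p⟫ := by
    intro p
    rw [hgdef, hFdef]
    simp only [real_inner_smul_right, inner_sub_right]
  have hgcont : Continuous g := by
    have h1 : Continuous fun p : E × E => ⟪A p.1, p.2⟫ := by
      have : Continuous fun p : E × E => (Ac p.1, p.2) :=
        (Ac.continuous.comp continuous_fst).prodMk continuous_snd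
      exact continuous_inner.comp this
    have h2 : Continuous fun p : E × E => ⟪p.1, p.2⟫ := continuous_inner
    have h3 : Continuous fun p : E × E => ⟪U, p.2⟫ :=
      continuous_inner.comp ((continuous_const (y := U)).prodMk continuous_snd)
    have h4 : Continuous fun p : E × E => ⟪U, p.1⟫ :=
      continuous_inner.comp ((continuous_const (y := U)).prodMk continuous_fst)
    exact (hφcont.comp h1).mul (h3.sub (h2.mul h4))
  -- a.e. both coordinates in K
  have haeKK : ∀ᵐ p ∂(μ.prod μ), p.1 ∈ K ∧ p.2 ∈ K := by
    have hKm : MeasurableSet K := by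
      have : IsClosed K := by
        have h1 : IsClosed {x : E | ‖x‖ = 1} := isClosed_eq continuous_norm continuous_const
        have h2 : IsClosed {x : E | Real.cos α ≤ ⟪x, U⟫} := by
          have : Continuous fun x : E => ⟪x, U⟫ :=
            continuous_inner.comp (continuous_id.prodMk continuous_const)
          exact isClosed_le continuous_const this
        exact h1.inter h2
      exact this.measurableSet
    have h0 : (μ.prod μ) ((K ×ˢ K)ᶜ) = 0 := by
      rw [Set.compl_prod_eq_union]
      refine le_antisymm ?_ zero_le
      calc (μ.prod μ) (Kᶜ ×ˢ Set.univ ∪ Set.univ ×ˢ Kᶜ)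
          ≤ (μ.prod μ) (Kᶜ ×ˢ Set.univ) + (μ.prod μ) (Set.univ ×ˢ Kᶜ) := measure_union_le _ _
      _ = 0 := by
            have hKc0 : μ Kᶜ = 0 := ae_iff.1 haeK
            rw [Measure.prod_prod, Measure.prod_prod, hKc0]; simp
    rw [ae_iff]
    refine measure_mono_null ?_ h0
    intro p hp
    simp only [Set.mem_setOf_eq, not_and] at hp
    simp only [Set.mem_compl_iff, Set.mem_prod]
    tauto
  -- integrability of g on the product
  have hgint : Integrable g (μ.prod μ) := by
    refine Integrable.mono' (integrable_const (2 * M)) hgcont.aestronglyMeasurable ?_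
    filter_upwards [haeKK] with p hp
    obtain ⟨hx, hy⟩ := hp
    have hxy : |⟪p.1, p.2⟫| ≤ 1 := by
      have := abs_real_inner_le_norm p.1 p.2
      rwa [hx.1, hy.1, mul_one] at this
    have hUx : |⟪U, p.1⟫| ≤ 1 := by
      have := abs_real_inner_le_norm U p.1
      rwa [hU, hx.1, mul_one] at this
    have hUy : |⟪U, p.2⟫| ≤ 1 := by
      have := abs_real_inner_le_norm U p.2
      rwa [hU, hy.1, mul_one] at this
    have h2 : |⟪U, p.2⟫ - ⟪p.1, p.2⟫ * ⟪U, p.1⟫| ≤ 2 := by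
      have := abs_mul ⟪p.1, p.2⟫ ⟪U, p.1⟫
      have habs : |⟪p.1, p.2⟫ * ⟪U, p.1⟫| ≤ 1 := by
        rw [abs_mul]
        calc |⟪p.1, p.2⟫| * |⟪U, p.1⟫| ≤ 1 * 1 :=
          mul_le_mul hxy hUx (abs_nonneg _) zero_le_one
        _ = 1 := one_mul 1
      calc |⟪U, p.2⟫ - ⟪p.1, p.2⟫ * ⟪U, p.1⟫| ≤ |⟪U, p.2⟫| + |⟪p.1, p.2⟫ * ⟪U, p.1⟫| :=
        abs_sub _ _
      _ ≤ 2 := by linarith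
    have h3 : |φ' ⟪A p.1, p.2⟫| ≤ M := by
      rw [abs_of_pos (hφpos _)]
      exact hφle p.1 hx p.2 hy
    calc ‖g p‖ = |φ' ⟪A p.1, p.2⟫| * |⟪U, p.2⟫ - ⟪p.1, p.2⟫ * ⟪U, p.1⟫| := by
          rw [hgdef]; simp [Real.norm_eq_abs, abs_mul]
    _ ≤ M * 2 := mul_le_mul h3 h2 (abs_nonneg _) hMpos.le
    _ = 2 * M := by ring
  -- the inner integral of g vanishes a.e.
  have hinner : ∀ᵐ x ∂μ, ∫ y, g (x, y) ∂μ = 0 := by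
    filter_upwards [hY0, haeK] with x hYx hx
    have hint := hFint x hx
    calc ∫ y, g (x, y) ∂μ = ∫ y, ⟪U, F (x, y)⟫ ∂μ := by
          exact integral_congr_ae (Filter.Eventually.of_forall fun y => hgF (x, y))
    _ = ⟪U, ∫ y, F (x, y) ∂μ⟫ := integral_inner hint U
    _ = ⟪U, Y x⟫ := rfl
    _ = 0 := by rw [hYx, inner_zero_right]
  -- double integral of g vanishes
  have hg0 : ∫ p, g p ∂(μ.prod μ) = 0 := by
    rw [MeasureTheory.integral_prod _ hgint]
    rw [integral_congr_ae (g := fun _ => (0:ℝ)) hinner, integral_zero]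
  have hgswap0 : ∫ p, g p.swap ∂(μ.prod μ) = 0 := by
    rw [MeasureTheory.integral_prod_swap g]
    exact hg0
  -- the symmetrized integrand
  set G : E × E → ℝ := fun p =>
    φ' ⟪A p.1, p.2⟫ * ((⟪U, p.1⟫ + ⟪U, p.2⟫) * (1 - ⟪p.1, p.2⟫)) with hGdef
  have hGsym : ∀ p : E × E, G p = g p + g p.swap := by
    intro p
    have h1 : ⟪A p.2, p.1⟫ = ⟪A p.1, p.2⟫ := by
      rw [hsymm, real_inner_comm]
    have h2 : ⟪p.2, p.1⟫ = ⟪p.1, p.2⟫ := real_inner_comm _ _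
    simp only [hGdef, hgdef, Prod.fst_swap, Prod.snd_swap, h1, h2]
    ring
  have hGint : Integrable G (μ.prod μ) := by
    have := hgint.add (hgint.swap)
    refine this.congr ?_
    filter_upwards with p
    exact (hGsym p).symm
  have hGnonneg : ∀ᵐ p ∂(μ.prod μ), 0 ≤ G p := by
    filter_upwards [haeKK] with p hp
    obtain ⟨hx, hy⟩ := hp
    have h1 : 0 < φ' ⟪A p.1, p.2⟫ := hφpos _
    have h2 : 0 < ⟪U, p.1⟫ + ⟪U, p.2⟫ := by
      have := hx.2; have := hy.2
      rw [real_inner_comm] at *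
      nlinarith [hx.2, hy.2, hcos]
    have h3 : 0 ≤ 1 - ⟪p.1, p.2⟫ := by
      have := real_inner_le_norm p.1 p.2
      rw [hx.1, hy.1, mul_one] at this
      linarith
    positivity
  have hG0 : ∫ p, G p ∂(μ.prod μ) = 0 := by
    calc ∫ p, G p ∂(μ.prod μ) = ∫ p, (g p + g p.swap) ∂(μ.prod μ) :=
          integral_congr_ae (Filter.Eventually.of_forall hGsym)
    _ = (∫ p, g p ∂(μ.prod μ)) + ∫ p, g p.swap ∂(μ.prod μ) := by
          exact integral_add hgint hgint.swap
    _ = 0 := by rw [hg0, hgswap0, add_zero]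
  -- hence G = 0 a.e., so the two coordinates agree a.e.
  have hGae : ∀ᵐ p ∂(μ.prod μ), G p = 0 := by
    have h := (integral_eq_zero_iff_of_nonneg_ae hGnonneg hGint).1 hG0
    filter_upwards [h] with p hp
    exact hp
  have hdiag : ∀ᵐ p ∂(μ.prod μ), p.1 = p.2 := by
    filter_upwards [hGae, haeKK] with p hG0p hp
    obtain ⟨hx, hy⟩ := hp
    have h1 : 0 < φ' ⟪A p.1, p.2⟫ := hφpos _
    have h2 : 0 < ⟪U, p.1⟫ + ⟪U, p.2⟫ := by
      have hx2 : Real.cos α ≤ ⟪U, p.1⟫ := by rw [real_inner_comm]; exact hx.2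
      have hy2 : Real.cos α ≤ ⟪U, p.2⟫ := by rw [real_inner_comm]; exact hy.2
      linarith
    have h3 : 1 - ⟪p.1, p.2⟫ = 0 := by
      rw [hGdef] at hG0p
      simp only at hG0p
      rcases mul_eq_zero.1 hG0p with h | h
      · exact absurd h h1.ne'
      · rcases mul_eq_zero.1 h with h' | h'
        · exact absurd h' h2.ne'
        · exact h'
    have hinner1 : ⟪p.1, p.2⟫ = 1 := by linarith
    have : ⟪p.1 - p.2, p.1 - p.2⟫ = 0 := by
      rw [inner_sub_left, inner_sub_right, inner_sub_right]
      have e1 : ⟪p.1, p.1⟫ = 1 := by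
        rw [real_inner_self_eq_norm_sq, hx.1]; norm_num
      have e2 : ⟪p.2, p.2⟫ = 1 := by
        rw [real_inner_self_eq_norm_sq, hy.1]; norm_num
      have e3 : ⟪p.2, p.1⟫ = 1 := by rw [real_inner_comm]; exact hinner1
      rw [e1, e2, e3, hinner1]; ring
    have := inner_self_eq_zero.1 this
    exact sub_eq_zero.1 this
  -- extract the Dirac point
  have hae2 : ∀ᵐ x ∂μ, ∀ᵐ y ∂μ, x = y := Measure.ae_ae_of_ae_prod hdiag
  haveI : (ae μ).NeBot := ae_neBot.2 (IsProbabilityMeasure.ne_zero μ)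
  obtain ⟨x₀, hx₀K, hx₀ae⟩ := (haeK.and hae2).exists
  have hμx₀ : μ ({x₀}ᶜ) = 0 := by
    have := hx₀ae
    rw [ae_iff] at this
    refine measure_mono_null ?_ this
    intro y hy
    simp only [Set.mem_compl_iff, Set.mem_singleton_iff] at hy
    simp only [Set.mem_setOf_eq]
    exact fun h => hy h.symm
  refine ⟨x₀, hx₀K.1, hx₀K.2, ?_⟩
  ext s hs
  rw [Measure.dirac_apply' _ hs]
  by_cases hxs : x₀ ∈ s
  · have hsc : μ sᶜ = 0 := by
      refine measure_mono_null ?_ hμx₀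
      intro y hy
      simp only [Set.mem_compl_iff, Set.mem_singleton_iff] at hy ⊢
      exact fun h => hy (h ▸ hxs)
    have := measure_add_measure_compl hs (μ := μ)
    rw [hsc, add_zero, measure_univ] at this
    rw [this, Set.indicator_of_mem hxs]
    rfl
  · have : μ s = 0 := by
      refine measure_mono_null ?_ hμx₀
      intro y hy
      simp only [Set.mem_compl_iff, Set.mem_singleton_iff]
      exact fun h => hxs (h ▸ hy)
    rw [this, Set.indicator_of_notMem hxs]
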